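/- If T is a quasinormal operator unitarily equivalent to N ⊕ (A ⊗ S) with N normal, A positive, and S the unilateral shift, then the Toeplitz-harmonic subspace T(T) is contained (after conjugation by the same unitary) in N(N) ⊕ (W(A) ⊗ T(S)), where N(N) is the abelian von Neumann algebra generated by N and I, W(A) is the WOT-closed algebra generated by A and I, and T(S) is the Toeplitz-harmonic subspace generated by S. -/

import Mathlib

open scoped InnerProductSpace ComplexOrder
noncomputable section

/-- Pairs of square-summable-type sequences inducing ultraweakly continuous functionals. -/
def UWPair (H : Type*) [NormedAddCommGroup H] [InnerProductSpace ℂ H] : Type _ :=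
  {p : (ℕ → H) × (ℕ → H) // Summable fun n => ‖p.1 n‖ * ‖p.2 n‖}

/-- The ultraweak (weak-star, sigma-weak) topology on B(H). -/
def ultraweak (H : Type*) [NormedAddCommGroup H] [InnerProductSpace ℂ H] :
    TopologicalSpace (H →L[ℂ] H) :=
  TopologicalSpace.induced
    (fun A => fun p : UWPair H => ∑' n, ⟪p.1.1 n, A (p.1.2 n)⟫_ℂ) Pi.topologicalSpace

/-- Weak-star closedness of a set of operators. -/
def WeakStarClosed {H : Type*} [NormedAddCommGroup H] [InnerProductSpace ℂ H]
    (S : Set (H →L[ℂ] H)) : Prop :=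
  @IsClosed _ (ultraweak H) S

/-- Weak-star closure. -/
def wstarClosure {H : Type*} [NormedAddCommGroup H] [InnerProductSpace ℂ H]
    (S : Set (H →L[ℂ] H)) : Set (H →L[ℂ] H) :=
  @closure _ (ultraweak H) S

/-- Weak-star closed linear span. -/
def wstarSpan {H : Type*} [NormedAddCommGroup H] [InnerProductSpace ℂ H]
    (S : Set (H →L[ℂ] H)) : Set (H →L[ℂ] H) :=
  wstarClosure ((Submodule.span ℂ S : Submodule ℂ (H →L[ℂ] H)) : Set (H →L[ℂ] H))

/-- `alpha k S A` : the distance from `A` to `S` measured by rank at most `k`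
trace-class annihilators of `S` of trace norm at most one.  A rank `≤ k` trace class
operator `t` with `‖t‖₁ ≤ 1` is exactly one of the form `∑ i, v i ⊗ (u i)^*` with
`∑ i, ‖u i‖ * ‖v i‖ ≤ 1`, and then `tr (A t) = ∑ i, ⟪u i, A (v i)⟫`. -/
def alpha {H : Type*} [NormedAddCommGroup H] [InnerProductSpace ℂ H]
    (k : ℕ) (S : Set (H →L[ℂ] H)) (A : H →L[ℂ] H) : ℝ :=
  sSup {r : ℝ | ∃ u v : Fin k → H, (∑ i, ‖u i‖ * ‖v i‖) ≤ 1 ∧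
    (∀ T ∈ S, (∑ i, ⟪u i, T (v i)⟫_ℂ) = 0) ∧ r = ‖∑ i, ⟪u i, A (v i)⟫_ℂ‖}

/-- `S` is `k`-hyperreflexive with constant `C`, i.e. `κ_k(S) ≤ C`. -/
def HyperRefl {H : Type*} [NormedAddCommGroup H] [InnerProductSpace ℂ H]
    (k : ℕ) (C : ℝ) (S : Set (H →L[ℂ] H)) : Prop :=
  ∀ A : H →L[ℂ] H, Metric.infDist A S ≤ C * alpha k S A

/-- The norm of a linear functional on B(H). -/
def fnNorm {H : Type*} [NormedAddCommGroup H] [InnerProductSpace ℂ H]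
    (ψ : (H →L[ℂ] H) →ₗ[ℂ] ℂ) : ℝ :=
  sSup {c : ℝ | ∃ A : H →L[ℂ] H, ‖A‖ ≤ 1 ∧ c = ‖ψ A‖}

/-- Property `𝔸_{1/k}(r)`: every weak-star continuous functional is implemented on `S`
by a rank `≤ k` operator of trace norm at most `(r + ε)` times the norm of the functional. -/
def PropA {H : Type*} [NormedAddCommGroup H] [InnerProductSpace ℂ H]
    (k : ℕ) (r : ℝ) (S : Set (H →L[ℂ] H)) : Prop :=
  ∀ ψ : (H →L[ℂ] H) →ₗ[ℂ] ℂ, @Continuous _ _ (ultraweak H) _ ψ →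
    ∀ ε > (0 : ℝ), ∃ u v : Fin k → H,
      (∑ i, ‖u i‖ * ‖v i‖) ≤ (r + ε) * fnNorm ψ ∧
      ∀ T ∈ S, ψ T = ∑ i, ⟪u i, T (v i)⟫_ℂ

/-- The image of a set of operators under conjugation by a unitary `U`,
i.e. `U S U⁻¹`. -/
def conjSet {H K : Type*} [NormedAddCommGroup H] [InnerProductSpace ℂ H]
    [NormedAddCommGroup K] [InnerProductSpace ℂ K]
    (U : H ≃ₗᵢ[ℂ] K) (S : Set (H →L[ℂ] H)) : Set (K →L[ℂ] K) :=
  {B | ∃ A ∈ S, ∀ x : H, B (U x) = U (A x)}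

/-- The Toeplitz-harmonic subspace generated by an operator `A` : the weak-star closure of
`{p(A) + q(A)^* : p, q analytic polynomials}`. -/
def THarm {H : Type*} [NormedAddCommGroup H] [InnerProductSpace ℂ H] [CompleteSpace H]
    (A : H →L[ℂ] H) : Set (H →L[ℂ] H) :=
  wstarClosure {B | ∃ p q : Polynomial ℂ,
    B = Polynomial.aeval A p + ContinuousLinearMap.adjoint (Polynomial.aeval A q)}

/-- Quasinormality: `T` commutes with `T* T`. -/
def Quasinormal {H : Type*} [NormedAddCommGroup H] [InnerProductSpace ℂ H] [CompleteSpace H]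
    (T : H →L[ℂ] H) : Prop :=
  Commute T (ContinuousLinearMap.adjoint T * T)

end

noncomputable section
/-- A realization of the Hilbert space tensor product `H ⊗ K` as a Hilbert space `HK`
together with the canonical bilinear map. -/
structure IsHilbertTensor {H K HK : Type*}
    [NormedAddCommGroup H] [InnerProductSpace ℂ H]
    [NormedAddCommGroup K] [InnerProductSpace ℂ K]
    [NormedAddCommGroup HK] [InnerProductSpace ℂ HK]
    (t : H →ₗ[ℂ] K →ₗ[ℂ] HK) : Prop where
  inner_tmul : ∀ (x x' : H) (y y' : K),
    ⟪t x y, t x' y'⟫_ℂ = ⟪x, x'⟫_ℂ * ⟪y, y'⟫_ℂ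
  dense_span : Dense ((Submodule.span ℂ {z : HK | ∃ x y, z = t x y} : Submodule ℂ HK) : Set HK)

/-- The weak-star closed tensor product `S₁ ⊗ S₂` of two subspaces of operators,
realized on a Hilbert space tensor product `HK` of `H` and `K`. -/
def tensorSub {H K HK : Type*}
    [NormedAddCommGroup H] [InnerProductSpace ℂ H]
    [NormedAddCommGroup K] [InnerProductSpace ℂ K]
    [NormedAddCommGroup HK] [InnerProductSpace ℂ HK]
    (t : H →ₗ[ℂ] K →ₗ[ℂ] HK)
    (S₁ : Set (H →L[ℂ] H)) (S₂ : Set (K →L[ℂ] K)) : Set (HK →L[ℂ] HK) :=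
  wstarSpan {C : HK →L[ℂ] HK | ∃ A ∈ S₁, ∃ B ∈ S₂,
    ∀ (x : H) (y : K), C (t x y) = t (A x) (B y)}
end

open scoped ENNReal
noncomputable section
namespace PaperShift

/-- The underlying function of the unilateral shift of an `ℓ²` sequence. -/
def shiftFun {K : Type*} [NormedAddCommGroup K] (f : ℕ → K) : ℕ → K
  | 0 => 0
  | n + 1 => f n

lemma shiftFun_summable {K : Type*} [NormedAddCommGroup K] (f : ℕ → K)
    (hf : Summable fun n => ‖f n‖ ^ (2 : ℝ)) :
    Summable fun n => ‖shiftFun f n‖ ^ (2 : ℝ) := by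
  rw [← summable_nat_add_iff 1]
  simpa [shiftFun] using hf

lemma two_toReal : ((2 : ℝ≥0∞).toReal) = (2 : ℝ) := by norm_num

lemma shiftFun_memℓp {K : Type*} [NormedAddCommGroup K] (f : lp (fun _ : ℕ => K) 2) :
    Memℓp (shiftFun (f : ∀ _ : ℕ, K)) 2 := by
  apply memℓp_gen
  have h := (lp.memℓp f).summable (p := 2) (by rw [two_toReal]; norm_num)
  rw [two_toReal] at h ⊢
  exact shiftFun_summable _ h

lemma shiftFun_tsum {K : Type*} [NormedAddCommGroup K] (f : ℕ → K) :
    (∑' n, ‖shiftFun f n‖ ^ (2 : ℝ)) = ∑' n, ‖f n‖ ^ (2 : ℝ) := by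
  by_cases h : Summable fun n => ‖f n‖ ^ (2 : ℝ)
  · rw [Summable.tsum_eq_zero_add (shiftFun_summable f h)]
    simp [shiftFun]
  · have h2 : ¬ Summable fun n => ‖shiftFun f n‖ ^ (2 : ℝ) := fun hs =>
      h (by simpa [shiftFun] using (summable_nat_add_iff 1).2 hs)
    rw [tsum_eq_zero_of_not_summable h2, tsum_eq_zero_of_not_summable h]

/-- The unilateral shift, `S(e_n) = e_{n+1}`, as a linear isometry of `ℓ²(ℕ, K)`. -/
def shiftOp (K : Type*) [NormedAddCommGroup K] [InnerProductSpace ℂ K] :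
    lp (fun _ : ℕ => K) 2 →L[ℂ] lp (fun _ : ℕ => K) 2 :=
  LinearIsometry.toContinuousLinearMap
  { toFun := fun f => ⟨shiftFun (f : ∀ _ : ℕ, K), shiftFun_memℓp f⟩
    map_add' := by
      intro f g; ext n
      cases n <;> simp [shiftFun, lp.coeFn_add] <;> first | exact (add_zero (0 : K)).symm | rfl
    map_smul' := by
      intro c f; ext n
      cases n <;> simp [shiftFun]
    norm_map' := by
      intro f
      rw [lp.norm_eq_tsum_rpow (by rw [two_toReal]; norm_num),
        lp.norm_eq_tsum_rpow (by rw [two_toReal]; norm_num)]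
      congr 1
      rw [two_toReal]
      exact shiftFun_tsum (f : ∀ _ : ℕ, K) }

end PaperShift
end

noncomputable section
open PaperShift

/-- The weak operator topology on B(H). -/
def wot (H : Type*) [NormedAddCommGroup H] [InnerProductSpace ℂ H] :
    TopologicalSpace (H →L[ℂ] H) :=
  TopologicalSpace.induced (fun A => fun p : H × H => ⟪p.1, A p.2⟫_ℂ) Pi.topologicalSpace

/-- `W(A)`: the WOT-closed unital algebra generated by `A`. -/
def WOTAlg {H : Type*} [NormedAddCommGroup H] [InnerProductSpace ℂ H]
    (A : H →L[ℂ] H) : Set (H →L[ℂ] H) :=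
  @closure _ (wot H) ((Algebra.adjoin ℂ {A} : Subalgebra ℂ (H →L[ℂ] H)) : Set (H →L[ℂ] H))

/-- `N(N)`: the smallest von Neumann algebra containing `N` (and `I`). -/
def vNGen {H : Type*} [NormedAddCommGroup H] [InnerProductSpace ℂ H] [CompleteSpace H]
    (N : H →L[ℂ] H) : Set (H →L[ℂ] H) :=
  ⋂₀ {M : Set (H →L[ℂ] H) | ∃ M' : VonNeumannAlgebra H, M = ↑M' ∧ N ∈ M'}

/-- Block-diagonal direct sum `S₁ ⊕ S₂` of two subspaces of operators. -/
def blockDiag {H₁ H₂ : Type*} [NormedAddCommGroup H₁] [InnerProductSpace ℂ H₁]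
    [NormedAddCommGroup H₂] [InnerProductSpace ℂ H₂]
    (S₁ : Set (H₁ →L[ℂ] H₁)) (S₂ : Set (H₂ →L[ℂ] H₂)) :
    Set (WithLp 2 (H₁ × H₂) →L[ℂ] WithLp 2 (H₁ × H₂)) :=
  {C | ∃ T₁ ∈ S₁, ∃ T₂ ∈ S₂, ∀ x : WithLp 2 (H₁ × H₂),
    C x = (WithLp.equiv 2 (H₁ × H₂)).symm
      (T₁ ((WithLp.equiv 2 (H₁ × H₂)) x).1, T₂ ((WithLp.equiv 2 (H₁ × H₂)) x).2)}


section Aux16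

open ContinuousLinearMap

variable {E F : Type*} [NormedAddCommGroup E] [InnerProductSpace ℂ E]
  [NormedAddCommGroup F] [InnerProductSpace ℂ F]

lemma uw_cont_pair (p : UWPair E) :
    @Continuous _ _ (ultraweak E) _ (fun B : E →L[ℂ] E => ∑' n, ⟪p.1.1 n, B (p.1.2 n)⟫_ℂ) := by
  letI : TopologicalSpace (E →L[ℂ] E) := ultraweak E
  have h : Continuous
      (fun A : E →L[ℂ] E => fun q : UWPair E => ∑' n, ⟪q.1.1 n, A (q.1.2 n)⟫_ℂ) := by
    exact continuous_induced_dom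
  exact (continuous_apply p).comp h

def singleSeq (u : E) : ℕ → E := fun n => if n = 0 then u else 0

lemma singleSeq_summable (u v : E) :
    Summable fun n => ‖singleSeq u n‖ * ‖singleSeq v n‖ := by
  apply summable_of_ne_finset_zero (s := {0})
  intro n hn
  have hne : n ≠ 0 := by simpa using hn
  simp [singleSeq, hne]

lemma uw_cont_single (u v : E) :
    @Continuous _ _ (ultraweak E) _ (fun B : E →L[ℂ] E => ⟪u, B v⟫_ℂ) := by
  have heq : (fun B : E →L[ℂ] E => ⟪u, B v⟫_ℂ)
      = fun B : E →L[ℂ] E => ∑' n, ⟪singleSeq u n, B (singleSeq v n)⟫_ℂ := by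
    funext B
    have h : ∑' n, ⟪singleSeq u n, B (singleSeq v n)⟫_ℂ = ⟪u, B v⟫_ℂ := by
      rw [tsum_eq_single 0 (by intro n hn; simp [singleSeq, hn])]
      simp [singleSeq]
    rw [h]
  rw [heq]
  exact uw_cont_pair ⟨(singleSeq u, singleSeq v), singleSeq_summable u v⟩

lemma uw_isClosed_eq {f g : (E →L[ℂ] E) → ℂ}
    (hf : @Continuous _ _ (ultraweak E) _ f) (hg : @Continuous _ _ (ultraweak E) _ g) :
    @IsClosed _ (ultraweak E) {B | f B = g B} := by
  letI : TopologicalSpace (E →L[ℂ] E) := ultraweak E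
  exact isClosed_eq hf hg

lemma uw_isClosed_centralizer [CompleteSpace E] (s : Set (E →L[ℂ] E)) :
    @IsClosed _ (ultraweak E) (Set.centralizer s) := by
  have hset : Set.centralizer s = ⋂ (a : E →L[ℂ] E) (_ : a ∈ s) (u : E) (v : E),
      {B : E →L[ℂ] E | ⟪adjoint a u, B v⟫_ℂ = ⟪u, B (a v)⟫_ℂ} := by
    ext B
    simp only [Set.mem_iInter, Set.mem_setOf_eq]
    constructor
    · intro hB a ha u v
      have h := hB a ha
      have h2 : a (B v) = B (a v) := by
        have := congrArg (fun X : E →L[ℂ] E => X v) h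
        simpa [ContinuousLinearMap.mul_apply] using this
      rw [ContinuousLinearMap.adjoint_inner_left, h2]
    · intro h a ha
      ext v
      rw [ContinuousLinearMap.mul_apply, ContinuousLinearMap.mul_apply]
      apply ext_inner_left ℂ
      intro u
      rw [← ContinuousLinearMap.adjoint_inner_left a]
      exact h a ha u v
  rw [hset]
  letI : TopologicalSpace (E →L[ℂ] E) := ultraweak E
  exact isClosed_iInter fun a => isClosed_iInter fun _ => isClosed_iInter fun u =>
    isClosed_iInter fun v => uw_isClosed_eq (uw_cont_single _ _) (uw_cont_single _ _)

lemma uw_isClosed_vNGen [CompleteSpace E] (N : E →L[ℂ] E) :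
    @IsClosed _ (ultraweak E) (vNGen N) := by
  letI : TopologicalSpace (E →L[ℂ] E) := ultraweak E
  refine isClosed_sInter ?_
  rintro M ⟨M', rfl, -⟩
  rw [← M'.centralizer_centralizer]
  exact uw_isClosed_centralizer _

lemma uw_continuous_of_pullback {φ : (E →L[ℂ] E) → (F →L[ℂ] F)}
    (h : ∀ q : UWPair F, ∃ p : UWPair E, ∀ B,
      (∑' n, ⟪q.1.1 n, (φ B) (q.1.2 n)⟫_ℂ) = ∑' n, ⟪p.1.1 n, B (p.1.2 n)⟫_ℂ) :
    @Continuous _ _ (ultraweak E) (ultraweak F) φ := by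
  letI : TopologicalSpace (E →L[ℂ] E) := ultraweak E
  letI : TopologicalSpace (F →L[ℂ] F) := ultraweak F
  refine continuous_induced_rng.mpr (continuous_pi fun q => ?_)
  obtain ⟨p, hp⟩ := h q
  have h2 := uw_cont_pair (E := E) p
  convert h2 using 1
  funext B
  exact hp B

/-- Conjugation of an operator by a unitary. -/
def conjCLM (U : E ≃ₗᵢ[ℂ] F) (B : E →L[ℂ] E) : F →L[ℂ] F :=
  ((U.toContinuousLinearEquiv : E →L[ℂ] F).comp B).comp
    (U.symm.toContinuousLinearEquiv : F →L[ℂ] E)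

@[simp] lemma conjCLM_apply (U : E ≃ₗᵢ[ℂ] F) (B : E →L[ℂ] E) (x : F) :
    conjCLM U B x = U (B (U.symm x)) := rfl

lemma uw_cont_conjCLM (U : E ≃ₗᵢ[ℂ] F) :
    @Continuous _ _ (ultraweak E) (ultraweak F) (conjCLM U) := by
  apply uw_continuous_of_pullback
  intro q
  refine ⟨⟨(fun n => U.symm (q.1.1 n), fun n => U.symm (q.1.2 n)), by simpa using q.2⟩, ?_⟩
  intro B
  refine tsum_congr fun n => ?_
  rw [conjCLM_apply, ← U.inner_map_map (U.symm (q.1.1 n)), U.apply_symm_apply]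

/-- Conjugation as an algebra homomorphism. -/
def conjA (U : E ≃ₗᵢ[ℂ] F) : (E →L[ℂ] E) →ₐ[ℂ] (F →L[ℂ] F) :=
  AlgHom.ofLinearMap
    { toFun := conjCLM U
      map_add' := fun B B' => by ext x; simp
      map_smul' := fun c B => by ext x; simp }
    (by ext x; simp)
    (fun B B' => by ext x; simp [ContinuousLinearMap.mul_apply])

@[simp] lemma conjA_apply (U : E ≃ₗᵢ[ℂ] F) (B : E →L[ℂ] E) : conjA U B = conjCLM U B := rfl

lemma conj_adjoint [CompleteSpace E] [CompleteSpace F] (U : E ≃ₗᵢ[ℂ] F) (B : E →L[ℂ] E) :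
    adjoint (conjCLM U B) = conjCLM U (adjoint B) := by
  refine ((ContinuousLinearMap.eq_adjoint_iff _ _).mpr fun x y => ?_).symm
  rw [conjCLM_apply, conjCLM_apply]
  calc ⟪U (adjoint B (U.symm x)), y⟫_ℂ
      = ⟪U (adjoint B (U.symm x)), U (U.symm y)⟫_ℂ := by rw [U.apply_symm_apply]
    _ = ⟪adjoint B (U.symm x), U.symm y⟫_ℂ := U.inner_map_map _ _
    _ = ⟪U.symm x, B (U.symm y)⟫_ℂ := ContinuousLinearMap.adjoint_inner_left _ _ _
    _ = ⟪U (U.symm x), U (B (U.symm y))⟫_ℂ := (U.inner_map_map _ _).symm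
    _ = ⟪x, U (B (U.symm y))⟫_ℂ := by rw [U.apply_symm_apply]

/-! Block maps on `WithLp 2 (E × F)` -/

variable (E F) in
def inlW : E →L[ℂ] WithLp 2 (E × F) :=
  (((WithLp.prodContinuousLinearEquiv 2 ℂ E F).symm : (E × F) →L[ℂ] WithLp 2 (E × F)).comp
    (ContinuousLinearMap.inl ℂ E F))

variable (E F) in
def inrW : F →L[ℂ] WithLp 2 (E × F) :=
  (((WithLp.prodContinuousLinearEquiv 2 ℂ E F).symm : (E × F) →L[ℂ] WithLp 2 (E × F)).comp
    (ContinuousLinearMap.inr ℂ E F))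

variable (E F) in
def fstW : WithLp 2 (E × F) →L[ℂ] E :=
  (ContinuousLinearMap.fst ℂ E F).comp
    ((WithLp.prodContinuousLinearEquiv 2 ℂ E F : WithLp 2 (E × F) →L[ℂ] (E × F)))

variable (E F) in
def sndW : WithLp 2 (E × F) →L[ℂ] F :=
  (ContinuousLinearMap.snd ℂ E F).comp
    ((WithLp.prodContinuousLinearEquiv 2 ℂ E F : WithLp 2 (E × F) →L[ℂ] (E × F)))

lemma inlW_fst (u : E) : (inlW E F u).fst = u := rfl
lemma inlW_snd (u : E) : (inlW E F u).snd = (0 : F) := rfl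
lemma inrW_fst (v : F) : (inrW E F v).fst = (0 : E) := rfl
lemma inrW_snd (v : F) : (inrW E F v).snd = v := rfl
lemma fstW_apply (x : WithLp 2 (E × F)) : fstW E F x = x.fst := rfl
lemma sndW_apply (x : WithLp 2 (E × F)) : sndW E F x = x.snd := rfl

lemma inner_inlW_left (u : E) (w : WithLp 2 (E × F)) :
    ⟪inlW E F u, w⟫_ℂ = ⟪u, w.fst⟫_ℂ := by
  rw [WithLp.prod_inner_apply]
  show ⟪(inlW E F u).fst, w.fst⟫_ℂ + ⟪(inlW E F u).snd, w.snd⟫_ℂ = _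
  rw [inlW_fst, inlW_snd, inner_zero_left, add_zero]

lemma inner_inrW_left (v : F) (w : WithLp 2 (E × F)) :
    ⟪inrW E F v, w⟫_ℂ = ⟪v, w.snd⟫_ℂ := by
  rw [WithLp.prod_inner_apply]
  show ⟪(inrW E F v).fst, w.fst⟫_ℂ + ⟪(inrW E F v).snd, w.snd⟫_ℂ = _
  rw [inrW_fst, inrW_snd, inner_zero_left, zero_add]

lemma norm_inlW (u : E) : ‖inlW E F u‖ = ‖u‖ :=
  WithLp.norm_toLp_fst 2 E F u

lemma norm_inrW (v : F) : ‖inrW E F v‖ = ‖v‖ :=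
  WithLp.norm_toLp_snd 2 E F v

lemma decompW (z : WithLp 2 (E × F)) : inlW E F z.fst + inrW E F z.snd = z := by
  have h : inlW E F z.fst + inrW E F z.snd
      = (WithLp.equiv 2 (E × F)).symm (z.fst + 0, 0 + z.snd) := rfl
  rw [h, add_zero, zero_add]
  rfl

variable (E F) in
/-- The block diagonal operator. -/
def blk (X : E →L[ℂ] E) (Y : F →L[ℂ] F) : WithLp 2 (E × F) →L[ℂ] WithLp 2 (E × F) :=
  (((WithLp.prodContinuousLinearEquiv 2 ℂ E F).symm : (E × F) →L[ℂ] WithLp 2 (E × F)).comp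
    ((X.prodMap Y).comp
      ((WithLp.prodContinuousLinearEquiv 2 ℂ E F : WithLp 2 (E × F) →L[ℂ] (E × F)))))

lemma blk_apply (X : E →L[ℂ] E) (Y : F →L[ℂ] F) (x : WithLp 2 (E × F)) :
    blk E F X Y x = (WithLp.equiv 2 (E × F)).symm (X x.fst, Y x.snd) := rfl

lemma blk_fst (X : E →L[ℂ] E) (Y : F →L[ℂ] F) (x : WithLp 2 (E × F)) :
    (blk E F X Y x).fst = X x.fst := rfl

lemma blk_snd (X : E →L[ℂ] E) (Y : F →L[ℂ] F) (x : WithLp 2 (E × F)) :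
    (blk E F X Y x).snd = Y x.snd := rfl

lemma blk_add (X X' : E →L[ℂ] E) (Y Y' : F →L[ℂ] F) :
    blk E F X Y + blk E F X' Y' = blk E F (X + X') (Y + Y') := by
  ext x <;> rfl

variable (E F) in
/-- The block diagonal map as an algebra homomorphism. -/
def blkA : ((E →L[ℂ] E) × (F →L[ℂ] F)) →ₐ[ℂ] (WithLp 2 (E × F) →L[ℂ] WithLp 2 (E × F)) :=
  AlgHom.ofLinearMap
    { toFun := fun XY => blk E F XY.1 XY.2
      map_add' := fun a b => by ext x <;> rfl
      map_smul' := fun c a => by ext x <;> rfl }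
    (by ext x <;> rfl)
    (fun a b => by ext x <;> rfl)

@[simp] lemma blkA_apply (XY : (E →L[ℂ] E) × (F →L[ℂ] F)) :
    blkA E F XY = blk E F XY.1 XY.2 := rfl

lemma aeval_blk (X : E →L[ℂ] E) (Y : F →L[ℂ] F) (p : Polynomial ℂ) :
    Polynomial.aeval (blk E F X Y) p = blk E F (Polynomial.aeval X p) (Polynomial.aeval Y p) := by
  have h := Polynomial.aeval_algHom_apply (blkA E F) (X, Y) p
  have hfst : Polynomial.aeval X p
      = (Polynomial.aeval ((X, Y) : (E →L[ℂ] E) × (F →L[ℂ] F)) p).1 := by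
    simpa using Polynomial.aeval_algHom_apply (AlgHom.fst ℂ (E →L[ℂ] E) (F →L[ℂ] F)) (X, Y) p
  have hsnd : Polynomial.aeval Y p
      = (Polynomial.aeval ((X, Y) : (E →L[ℂ] E) × (F →L[ℂ] F)) p).2 := by
    simpa using Polynomial.aeval_algHom_apply (AlgHom.snd ℂ (E →L[ℂ] E) (F →L[ℂ] F)) (X, Y) p
  rw [hfst, hsnd]
  simpa using h

lemma adjoint_blk [CompleteSpace E] [CompleteSpace F] (X : E →L[ℂ] E) (Y : F →L[ℂ] F) :
    adjoint (blk E F X Y) = blk E F (adjoint X) (adjoint Y) := by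
  refine ((ContinuousLinearMap.eq_adjoint_iff _ _).mpr fun x y => ?_).symm
  rw [WithLp.prod_inner_apply, WithLp.prod_inner_apply]
  show ⟪(blk E F (adjoint X) (adjoint Y) x).fst, y.fst⟫_ℂ
      + ⟪(blk E F (adjoint X) (adjoint Y) x).snd, y.snd⟫_ℂ
    = ⟪x.fst, (blk E F X Y y).fst⟫_ℂ + ⟪x.snd, (blk E F X Y y).snd⟫_ℂ
  rw [blk_fst, blk_snd, blk_fst, blk_snd,
    ContinuousLinearMap.adjoint_inner_left, ContinuousLinearMap.adjoint_inner_left]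

lemma uw_cont_fstW_conj :
    @Continuous _ _ (ultraweak (WithLp 2 (E × F))) (ultraweak E)
      (fun B : WithLp 2 (E × F) →L[ℂ] WithLp 2 (E × F) =>
        (fstW E F).comp (B.comp (inlW E F))) := by
  apply uw_continuous_of_pullback
  intro q
  refine ⟨⟨(fun n => inlW E F (q.1.1 n), fun n => inlW E F (q.1.2 n)), by
    simpa [norm_inlW] using q.2⟩, ?_⟩
  intro B
  refine tsum_congr fun n => ?_
  rw [inner_inlW_left]
  rfl

lemma uw_cont_sndW_conj :
    @Continuous _ _ (ultraweak (WithLp 2 (E × F))) (ultraweak F)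
      (fun B : WithLp 2 (E × F) →L[ℂ] WithLp 2 (E × F) =>
        (sndW E F).comp (B.comp (inrW E F))) := by
  apply uw_continuous_of_pullback
  intro q
  refine ⟨⟨(fun n => inrW E F (q.1.1 n), fun n => inrW E F (q.1.2 n)), by
    simpa [norm_inrW] using q.2⟩, ?_⟩
  intro B
  refine tsum_congr fun n => ?_
  rw [inner_inrW_left]
  rfl

/-! Tensor product lemmas -/

variable {K₂ HK₂ : Type*} [NormedAddCommGroup K₂] [InnerProductSpace ℂ K₂] [CompleteSpace K₂]
  [NormedAddCommGroup HK₂] [InnerProductSpace ℂ HK₂] [CompleteSpace HK₂]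

lemma tensor_ext {t : K₂ →ₗ[ℂ] (lp (fun _ : ℕ => ℂ) 2) →ₗ[ℂ] HK₂} (ht : IsHilbertTensor t)
    {z w : HK₂} (h : ∀ x y, ⟪t x y, z⟫_ℂ = ⟪t x y, w⟫_ℂ) : z = w := by
  have hc1 : Continuous fun v : HK₂ => ⟪v, z⟫_ℂ := continuous_id.inner continuous_const
  have hc2 : Continuous fun v : HK₂ => ⟪v, w⟫_ℂ := continuous_id.inner continuous_const
  have heqon : Set.EqOn (fun v : HK₂ => ⟪v, z⟫_ℂ) (fun v : HK₂ => ⟪v, w⟫_ℂ)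
      ((Submodule.span ℂ {z' : HK₂ | ∃ x y, z' = t x y} : Submodule ℂ HK₂) : Set HK₂) := by
    intro v hv
    induction hv using Submodule.span_induction with
    | mem v hv => obtain ⟨x, y, rfl⟩ := hv; exact h x y
    | zero => simp
    | add a b ha hb hha hhb => simp only [inner_add_left, hha, hhb]
    | smul c a ha hha => simp only [inner_smul_left, hha]
  have := Continuous.ext_on ht.dense_span hc1 hc2 heqon
  exact ext_inner_left ℂ fun v => congrFun this v

lemma adjoint_tensor {t : K₂ →ₗ[ℂ] (lp (fun _ : ℕ => ℂ) 2) →ₗ[ℂ] HK₂} (ht : IsHilbertTensor t)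
    {A : K₂ →L[ℂ] K₂} {C : HK₂ →L[ℂ] HK₂}
    (hC : ∀ x y, C (t x y) = t (A x) (PaperShift.shiftOp ℂ y)) (hA : A.IsPositive)
    (x : K₂) (y : lp (fun _ : ℕ => ℂ) 2) :
    adjoint C (t x y) = t (A x) (adjoint (PaperShift.shiftOp ℂ) y) := by
  have hAadj : adjoint A = A := by
    rw [← ContinuousLinearMap.star_eq_adjoint]; exact hA.isSelfAdjoint
  apply tensor_ext ht
  intro x' y'
  calc ⟪t x' y', adjoint C (t x y)⟫_ℂ
      = ⟪C (t x' y'), t x y⟫_ℂ := ContinuousLinearMap.adjoint_inner_right _ _ _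
    _ = ⟪t (A x') (PaperShift.shiftOp ℂ y'), t x y⟫_ℂ := by rw [hC]
    _ = ⟪A x', x⟫_ℂ * ⟪PaperShift.shiftOp ℂ y', y⟫_ℂ := ht.inner_tmul _ _ _ _
    _ = ⟪x', A x⟫_ℂ * ⟪y', adjoint (PaperShift.shiftOp ℂ) y⟫_ℂ := by
        rw [ContinuousLinearMap.adjoint_inner_right, ← hAadj,
          ContinuousLinearMap.adjoint_inner_left, hAadj]
    _ = ⟪t x' y', t (A x) (adjoint (PaperShift.shiftOp ℂ) y)⟫_ℂ := (ht.inner_tmul _ _ _ _).symm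

lemma pow_tensor {t : K₂ →ₗ[ℂ] (lp (fun _ : ℕ => ℂ) 2) →ₗ[ℂ] HK₂}
    {A : K₂ →L[ℂ] K₂} {C : HK₂ →L[ℂ] HK₂} {S0 : (lp (fun _ : ℕ => ℂ) 2) →L[ℂ] _}
    (hC : ∀ x y, C (t x y) = t (A x) (S0 y)) (k : ℕ)
    (x : K₂) (y : lp (fun _ : ℕ => ℂ) 2) :
    (C ^ k) (t x y) = t ((A ^ k) x) ((S0 ^ k) y) := by
  induction k with
  | zero => simp
  | succ k ih =>
      rw [pow_succ', pow_succ', pow_succ', ContinuousLinearMap.mul_apply,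
        ContinuousLinearMap.mul_apply, ContinuousLinearMap.mul_apply, ih, hC]

end Aux16

set_option maxHeartbeats 1600000 in
/-- if a quasinormal `T` is unitarily equivalent to `N ⊕ (A ⊗ S)`
(`N` normal, `A` positive, `S` the unilateral shift on `ℓ²(ℕ)`, and `K₂ ⊗ ℓ²(ℕ)`
realized as a Hilbert tensor product `HK₂`), then after conjugation by the same
unitary the Toeplitz-harmonic subspace `T(T)` is contained in
`N(N) ⊕ (W(A) ⊗ T(S))`. -/
theorem toeplitz_harmonic_subset_model {H K₁ K₂ HK₂ : Type*}
    [NormedAddCommGroup H] [InnerProductSpace ℂ H] [CompleteSpace H]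
    [TopologicalSpace.SeparableSpace H]
    [NormedAddCommGroup K₁] [InnerProductSpace ℂ K₁] [CompleteSpace K₁]
    [NormedAddCommGroup K₂] [InnerProductSpace ℂ K₂] [CompleteSpace K₂]
    [NormedAddCommGroup HK₂] [InnerProductSpace ℂ HK₂] [CompleteSpace HK₂]
    (t : K₂ →ₗ[ℂ] (lp (fun _ : ℕ => ℂ) 2) →ₗ[ℂ] HK₂) (ht : IsHilbertTensor t)
    (T : H →L[ℂ] H) (hqn : Quasinormal T)
    (N : K₁ →L[ℂ] K₁) (hN : IsStarNormal N)
    (A : K₂ →L[ℂ] K₂) (hA : A.IsPositive)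
    (U : H ≃ₗᵢ[ℂ] WithLp 2 (K₁ × HK₂))
    (C : HK₂ →L[ℂ] HK₂)
    (hC : ∀ (y : K₂) (z : lp (fun _ : ℕ => ℂ) 2), C (t y z) = t (A y) (shiftOp ℂ z))
    (hU : ∀ x : H, U (T x) = (WithLp.equiv 2 (K₁ × HK₂)).symm
      (N (((WithLp.equiv 2 (K₁ × HK₂)) (U x)).1),
       C (((WithLp.equiv 2 (K₁ × HK₂)) (U x)).2))) :
    conjSet U (THarm T) ⊆
      blockDiag (vNGen N) (tensorSub t (WOTAlg A) (THarm (shiftOp ℂ))) := by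
  classical
  intro B hB
  obtain ⟨D, hD, hBD⟩ := hB
  have hB' : B = conjCLM U D := by
    ext y
    have h := hBD (U.symm y)
    rw [U.apply_symm_apply] at h
    rw [h, conjCLM_apply]
  have hMT : conjCLM U T = blk K₁ HK₂ N C := by
    ext y
    have h := hU (U.symm y)
    rw [U.apply_symm_apply] at h
    rw [conjCLM_apply, h]
    rfl
  have hadjC : ∀ (x : K₂) (y : lp (fun _ : ℕ => ℂ) 2),
      ContinuousLinearMap.adjoint C (t x y)
        = t (A x) (ContinuousLinearMap.adjoint (shiftOp ℂ) y) := adjoint_tensor ht hC hA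
  have hWOTpow : ∀ k : ℕ, A ^ k ∈ WOTAlg A := by
    intro k
    unfold WOTAlg
    letI : TopologicalSpace (K₂ →L[ℂ] K₂) := wot K₂
    exact subset_closure
      (SetLike.mem_coe.mpr (pow_mem (Algebra.self_mem_adjoin_singleton ℂ A) k))
  have hTSpow : ∀ k : ℕ, (shiftOp ℂ) ^ k ∈ THarm (shiftOp ℂ) := by
    intro k
    unfold THarm wstarClosure
    letI : TopologicalSpace ((lp (fun _ : ℕ => ℂ) 2) →L[ℂ] (lp (fun _ : ℕ => ℂ) 2)) :=
      ultraweak _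
    refine subset_closure ⟨Polynomial.X ^ k, 0, ?_⟩
    simp
  have hTSadjpow : ∀ k : ℕ,
      (ContinuousLinearMap.adjoint (shiftOp ℂ)) ^ k ∈ THarm (shiftOp ℂ) := by
    intro k
    unfold THarm wstarClosure
    letI : TopologicalSpace ((lp (fun _ : ℕ => ℂ) 2) →L[ℂ] (lp (fun _ : ℕ => ℂ) 2)) :=
      ultraweak _
    refine subset_closure ⟨0, Polynomial.X ^ k, ?_⟩
    simp [← ContinuousLinearMap.star_eq_adjoint, star_pow]
  have htens : ∀ p q : Polynomial ℂ,
      Polynomial.aeval C p + ContinuousLinearMap.adjoint (Polynomial.aeval C q)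
        ∈ tensorSub t (WOTAlg A) (THarm (shiftOp ℂ)) := by
    intro p q
    unfold tensorSub wstarSpan wstarClosure
    letI : TopologicalSpace (HK₂ →L[ℂ] HK₂) := ultraweak HK₂
    apply subset_closure
    refine SetLike.mem_coe.mpr (Submodule.add_mem _ ?_ ?_)
    · rw [Polynomial.aeval_eq_sum_range]
      refine Submodule.sum_mem _ fun i _ => Submodule.smul_mem _ _ (Submodule.subset_span ?_)
      exact ⟨A ^ i, hWOTpow i, (shiftOp ℂ) ^ i, hTSpow i, pow_tensor hC i⟩
    · rw [← ContinuousLinearMap.star_eq_adjoint, Polynomial.aeval_eq_sum_range, star_sum]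
      refine Submodule.sum_mem _ fun i _ => ?_
      rw [star_smul, star_pow, ContinuousLinearMap.star_eq_adjoint]
      refine Submodule.smul_mem _ _ (Submodule.subset_span ?_)
      exact ⟨A ^ i, hWOTpow i, (ContinuousLinearMap.adjoint (shiftOp ℂ)) ^ i, hTSadjpow i,
        pow_tensor hadjC i⟩
  have hvN : ∀ p q : Polynomial ℂ,
      Polynomial.aeval N p + ContinuousLinearMap.adjoint (Polynomial.aeval N q) ∈ vNGen N := by
    intro p q
    unfold vNGen
    refine Set.mem_sInter.mpr ?_
    rintro M ⟨M', rfl, hNmem⟩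
    have haev : ∀ r : Polynomial ℂ, Polynomial.aeval N r ∈ M' := by
      intro r
      have h1 : Polynomial.aeval N r ∈ Algebra.adjoin ℂ {N} := by
        rw [Algebra.adjoin_singleton_eq_range_aeval]
        exact ⟨r, rfl⟩
      have h2 : Algebra.adjoin ℂ {N} ≤ M'.toStarSubalgebra.toSubalgebra :=
        Algebra.adjoin_le (by simpa using hNmem)
      exact h2 h1
    refine SetLike.mem_coe.mpr (add_mem (haev p) ?_)
    rw [← ContinuousLinearMap.star_eq_adjoint]
    exact star_mem (haev q)
  -- the closed superset
  let Zoff1 : Set (WithLp 2 (K₁ × HK₂) →L[ℂ] WithLp 2 (K₁ × HK₂)) :=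
    {B' | ∀ (u : K₁) (v : HK₂), ⟪inlW K₁ HK₂ u, B' (inrW K₁ HK₂ v)⟫_ℂ = 0}
  let Zoff2 : Set (WithLp 2 (K₁ × HK₂) →L[ℂ] WithLp 2 (K₁ × HK₂)) :=
    {B' | ∀ (v : HK₂) (u : K₁), ⟪inrW K₁ HK₂ v, B' (inlW K₁ HK₂ u)⟫_ℂ = 0}
  let Z1 : Set (WithLp 2 (K₁ × HK₂) →L[ℂ] WithLp 2 (K₁ × HK₂)) :=
    (fun B' : WithLp 2 (K₁ × HK₂) →L[ℂ] WithLp 2 (K₁ × HK₂) =>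
      (fstW K₁ HK₂).comp (B'.comp (inlW K₁ HK₂))) ⁻¹' (vNGen N)
  let Z2 : Set (WithLp 2 (K₁ × HK₂) →L[ℂ] WithLp 2 (K₁ × HK₂)) :=
    (fun B' : WithLp 2 (K₁ × HK₂) →L[ℂ] WithLp 2 (K₁ × HK₂) =>
      (sndW K₁ HK₂).comp (B'.comp (inrW K₁ HK₂))) ⁻¹'
        (tensorSub t (WOTAlg A) (THarm (shiftOp ℂ)))
  have hZclosed : @IsClosed _ (ultraweak (WithLp 2 (K₁ × HK₂))) (Zoff1 ∩ Zoff2 ∩ Z1 ∩ Z2) := by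
    letI : TopologicalSpace (WithLp 2 (K₁ × HK₂) →L[ℂ] WithLp 2 (K₁ × HK₂)) :=
      ultraweak (WithLp 2 (K₁ × HK₂))
    letI : TopologicalSpace (K₁ →L[ℂ] K₁) := ultraweak K₁
    letI : TopologicalSpace (HK₂ →L[ℂ] HK₂) := ultraweak HK₂
    have h1 : IsClosed Zoff1 := by
      have he : Zoff1 = ⋂ (u : K₁) (v : HK₂),
          {B' : WithLp 2 (K₁ × HK₂) →L[ℂ] WithLp 2 (K₁ × HK₂) |
            (fun B'' => ⟪inlW K₁ HK₂ u, B'' (inrW K₁ HK₂ v)⟫_ℂ) B' = (fun _ => (0 : ℂ)) B'} := by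
        ext B'
        simp [Zoff1, Set.mem_iInter]
      rw [he]
      exact isClosed_iInter fun u => isClosed_iInter fun v =>
        uw_isClosed_eq (uw_cont_single _ _) continuous_const
    have h2 : IsClosed Zoff2 := by
      have he : Zoff2 = ⋂ (v : HK₂) (u : K₁),
          {B' : WithLp 2 (K₁ × HK₂) →L[ℂ] WithLp 2 (K₁ × HK₂) |
            (fun B'' => ⟪inrW K₁ HK₂ v, B'' (inlW K₁ HK₂ u)⟫_ℂ) B' = (fun _ => (0 : ℂ)) B'} := by
        ext B'
        simp [Zoff2, Set.mem_iInter]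
      rw [he]
      exact isClosed_iInter fun v => isClosed_iInter fun u =>
        uw_isClosed_eq (uw_cont_single _ _) continuous_const
    have h3 : IsClosed Z1 := (uw_isClosed_vNGen N).preimage uw_cont_fstW_conj
    have h4 : IsClosed Z2 := by
      have hS2 : IsClosed (tensorSub t (WOTAlg A) (THarm (shiftOp ℂ))) := by
        unfold tensorSub wstarSpan wstarClosure
        exact isClosed_closure
      exact hS2.preimage uw_cont_sndW_conj
    exact ((h1.inter h2).inter h3).inter h4
  have himg : ∀ D' ∈ {B0 : H →L[ℂ] H | ∃ p q : Polynomial ℂ,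
        B0 = Polynomial.aeval T p + ContinuousLinearMap.adjoint (Polynomial.aeval T q)},
      conjCLM U D' ∈ Zoff1 ∩ Zoff2 ∩ Z1 ∩ Z2 := by
    rintro D' ⟨p, q, rfl⟩
    have hconj : conjCLM U
        (Polynomial.aeval T p + ContinuousLinearMap.adjoint (Polynomial.aeval T q))
        = blk K₁ HK₂
            (Polynomial.aeval N p + ContinuousLinearMap.adjoint (Polynomial.aeval N q))
            (Polynomial.aeval C p + ContinuousLinearMap.adjoint (Polynomial.aeval C q)) := by
      have e1 : conjCLM U (Polynomial.aeval T p) = Polynomial.aeval (blk K₁ HK₂ N C) p := by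
        rw [← hMT]
        exact (Polynomial.aeval_algHom_apply (conjA U) T p).symm
      have e1q : conjCLM U (Polynomial.aeval T q) = Polynomial.aeval (blk K₁ HK₂ N C) q := by
        rw [← hMT]
        exact (Polynomial.aeval_algHom_apply (conjA U) T q).symm
      have e2 : conjCLM U
          (Polynomial.aeval T p + ContinuousLinearMap.adjoint (Polynomial.aeval T q))
          = conjCLM U (Polynomial.aeval T p)
            + conjCLM U (ContinuousLinearMap.adjoint (Polynomial.aeval T q)) :=
        map_add (conjA U) _ _
      rw [e2, e1, ← conj_adjoint, e1q, aeval_blk, aeval_blk, adjoint_blk, blk_add]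
    rw [hconj]
    refine ⟨⟨⟨?_, ?_⟩, ?_⟩, ?_⟩
    · intro u v
      rw [inner_inlW_left, blk_fst, inrW_fst, map_zero, inner_zero_right]
    · intro v u
      rw [inner_inrW_left, blk_snd, inlW_snd, map_zero, inner_zero_right]
    · show (fstW K₁ HK₂).comp ((blk K₁ HK₂
          (Polynomial.aeval N p + ContinuousLinearMap.adjoint (Polynomial.aeval N q))
          (Polynomial.aeval C p + ContinuousLinearMap.adjoint (Polynomial.aeval C q))).comp
            (inlW K₁ HK₂)) ∈ vNGen N
      have hcomp : (fstW K₁ HK₂).comp ((blk K₁ HK₂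
          (Polynomial.aeval N p + ContinuousLinearMap.adjoint (Polynomial.aeval N q))
          (Polynomial.aeval C p + ContinuousLinearMap.adjoint (Polynomial.aeval C q))).comp
            (inlW K₁ HK₂))
          = Polynomial.aeval N p + ContinuousLinearMap.adjoint (Polynomial.aeval N q) := by
        ext u
        rfl
      rw [hcomp]
      exact hvN p q
    · show (sndW K₁ HK₂).comp ((blk K₁ HK₂
          (Polynomial.aeval N p + ContinuousLinearMap.adjoint (Polynomial.aeval N q))
          (Polynomial.aeval C p + ContinuousLinearMap.adjoint (Polynomial.aeval C q))).comp
            (inrW K₁ HK₂)) ∈ tensorSub t (WOTAlg A) (THarm (shiftOp ℂ))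
      have hcomp : (sndW K₁ HK₂).comp ((blk K₁ HK₂
          (Polynomial.aeval N p + ContinuousLinearMap.adjoint (Polynomial.aeval N q))
          (Polynomial.aeval C p + ContinuousLinearMap.adjoint (Polynomial.aeval C q))).comp
            (inrW K₁ HK₂))
          = Polynomial.aeval C p + ContinuousLinearMap.adjoint (Polynomial.aeval C q) := by
        ext v
        rfl
      rw [hcomp]
      exact htens p q
  have hDZ : conjCLM U D ∈ Zoff1 ∩ Zoff2 ∩ Z1 ∩ Z2 := by
    letI : TopologicalSpace (H →L[ℂ] H) := ultraweak H
    letI : TopologicalSpace (WithLp 2 (K₁ × HK₂) →L[ℂ] WithLp 2 (K₁ × HK₂)) :=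
      ultraweak (WithLp 2 (K₁ × HK₂))
    have hDmem : D ∈ closure {B0 : H →L[ℂ] H | ∃ p q : Polynomial ℂ,
        B0 = Polynomial.aeval T p + ContinuousLinearMap.adjoint (Polynomial.aeval T q)} := hD
    have h1 : conjCLM U D ∈ closure (conjCLM U '' {B0 : H →L[ℂ] H | ∃ p q : Polynomial ℂ,
        B0 = Polynomial.aeval T p + ContinuousLinearMap.adjoint (Polynomial.aeval T q)}) :=
      image_closure_subset_closure_image (uw_cont_conjCLM U) ⟨D, hDmem, rfl⟩
    refine (IsClosed.closure_subset_iff hZclosed).mpr ?_ h1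
    rintro x ⟨D', hD', rfl⟩
    exact himg D' hD'
  rw [hB']
  obtain ⟨⟨⟨hz1, hz2⟩, hz3⟩, hz4⟩ := hDZ
  refine ⟨(fstW K₁ HK₂).comp ((conjCLM U D).comp (inlW K₁ HK₂)), hz3,
    (sndW K₁ HK₂).comp ((conjCLM U D).comp (inrW K₁ HK₂)), hz4, fun x => ?_⟩
  have hcross1 : ((conjCLM U D) (inrW K₁ HK₂ x.snd)).fst = (0 : K₁) := by
    apply ext_inner_left ℂ
    intro u
    rw [inner_zero_right, ← inner_inlW_left]
    exact hz1 u x.snd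
  have hcross2 : ((conjCLM U D) (inlW K₁ HK₂ x.fst)).snd = (0 : HK₂) := by
    apply ext_inner_left ℂ
    intro v
    rw [inner_zero_right, ← inner_inrW_left]
    exact hz2 v x.fst
  have hBx : (conjCLM U D) x
      = (conjCLM U D) (inlW K₁ HK₂ x.fst) + (conjCLM U D) (inrW K₁ HK₂ x.snd) := by
    conv_lhs => rw [← decompW x]
    rw [map_add]
  refine WithLp.ofLp_injective 2 (Prod.ext ?_ ?_)
  · show ((conjCLM U D) x).fst = ((conjCLM U D) (inlW K₁ HK₂ x.fst)).fst
    rw [hBx]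
    show ((conjCLM U D) (inlW K₁ HK₂ x.fst)).fst
        + ((conjCLM U D) (inrW K₁ HK₂ x.snd)).fst = _
    rw [hcross1, add_zero]
  · show ((conjCLM U D) x).snd = ((conjCLM U D) (inrW K₁ HK₂ x.snd)).snd
    rw [hBx]
    show ((conjCLM U D) (inlW K₁ HK₂ x.fst)).snd
        + ((conjCLM U D) (inrW K₁ HK₂ x.snd)).snd = _
    rw [hcross2, zero_add]
end
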